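/- In the same setting: ‖ỹ − x‖² ≤ 2 α_max μ (√(1 + τ/2) + √(τ/2))² (−h(ỹ)). -/

import Mathlib

open Matrix

/-- Action of a matrix on a vector of `EuclideanSpace ℝ (Fin n)`. -/
noncomputable def mulVecE {n : ℕ} (D : Matrix (Fin n) (Fin n) ℝ)
    (v : EuclideanSpace ℝ (Fin n)) : EuclideanSpace ℝ (Fin n) :=
  (WithLp.equiv 2 (Fin n → ℝ)).symm (D *ᵥ fun i => v i)

/-- The quadratic form `⟨v, D v⟩` (i.e. `‖v‖_D²`). -/
noncomputable def quadE {n : ℕ} (D : Matrix (Fin n) (Fin n) ℝ)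
    (v : EuclideanSpace ℝ (Fin n)) : ℝ :=
  (fun i => v i) ⬝ᵥ (D *ᵥ fun i => v i)

set_option maxHeartbeats 2000000 in
theorem stmt8 {n : ℕ} (f : EuclideanSpace ℝ (Fin n) → ℝ) (hf : ContDiff ℝ 1 f)
    (φ : EuclideanSpace ℝ (Fin n) → ℝ) (hconv : ConvexOn ℝ Set.univ φ)
    (hlsc : LowerSemicontinuous φ)
    (α αmax β τ μ : ℝ) (hα : 0 < α) (hαmax : α ≤ αmax) (hβ : 0 < β) (hτ : 0 ≤ τ) (hμ : 0 < μ)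
    (D : Matrix (Fin n) (Fin n) ℝ) (hsym : D.IsSymm) (hpd : D.PosDef)
    (hlow : ∀ v : Fin n → ℝ, (1/μ) * (v ⬝ᵥ v) ≤ v ⬝ᵥ (D *ᵥ v))
    (hup : ∀ v : Fin n → ℝ, v ⬝ᵥ (D *ᵥ v) ≤ μ * (v ⬝ᵥ v))
    (x w : EuclideanSpace ℝ (Fin n))
    (h : EuclideanSpace ℝ (Fin n) → ℝ)
    (hh : h = fun y => (inner ℝ (gradient f x - (β/α) • mulVecE D (x - w)) (y - x) : ℝ)
      + (1/(2*α)) * quadE D (y - x) + φ y - φ x)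
    (yhat ytil : EuclideanSpace ℝ (Fin n)) (hmin : IsMinOn h Set.univ yhat)
    (happrox : h ytil ≤ (2/(2+τ)) * h yhat) :
    ‖ytil - x‖^2 ≤ 2 * αmax * μ * (Real.sqrt (1 + τ/2) + Real.sqrt (τ/2))^2 * (-h ytil) := by
  classical
  have hα2 : (0:ℝ) < 2*α := by linarith
  have hc : (0:ℝ) < 1/(2*α) := by positivity
  set c : ℝ := 1/(2*α) with hcdef
  set g : EuclideanSpace ℝ (Fin n) := gradient f x - (β/α) • mulVecE D (x - w) with hg
  have hval : ∀ y, h y = (inner ℝ g (y - x) : ℝ) + c * quadE D (y - x) + φ y - φ x := by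
    intro y; rw [hh]
  -- the coordinate map
  set E : EuclideanSpace ℝ (Fin n) → (Fin n → ℝ) := fun v i => v i with hE
  have hE_sub : ∀ u v, E (u - v) = E u - E v := by intro u v; funext i; simp [hE]
  have hE_add : ∀ u v, E (u + v) = E u + E v := by intro u v; funext i; simp [hE]
  have hE_smul : ∀ (s : ℝ) u, E (s • u) = s • E u := by intro s u; funext i; simp [hE]
  have hquad : ∀ v, quadE D v = E v ⬝ᵥ (D *ᵥ E v) := fun v => rfl
  -- basic facts about the quadratic form
  have hdotself : ∀ u : Fin n → ℝ, 0 ≤ u ⬝ᵥ u := by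
    intro u; simp only [dotProduct]
    exact Finset.sum_nonneg fun i _ => mul_self_nonneg _
  have hq0 : ∀ u : Fin n → ℝ, 0 ≤ u ⬝ᵥ (D *ᵥ u) := by
    intro u
    have h1 := hlow u
    have h2 : 0 ≤ (1/μ) * (u ⬝ᵥ u) := by
      have := hdotself u; positivity
    linarith
  have hBsymm : ∀ u v : Fin n → ℝ, u ⬝ᵥ (D *ᵥ v) = v ⬝ᵥ (D *ᵥ u) := by
    intro u v
    rw [dotProduct_mulVec, ← mulVec_transpose, hsym.eq, dotProduct_comm]
  have hexp : ∀ (u v : Fin n → ℝ) (s t : ℝ),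
      (s • u + t • v) ⬝ᵥ (D *ᵥ (s • u + t • v))
        = s^2 * (u ⬝ᵥ (D *ᵥ u)) + 2*s*t*(u ⬝ᵥ (D *ᵥ v)) + t^2 * (v ⬝ᵥ (D *ᵥ v)) := by
    intro u v s t
    simp only [mulVec_add, mulVec_smul, dotProduct_add, add_dotProduct,
      dotProduct_smul, smul_dotProduct, smul_eq_mul]
    rw [hBsymm v u]; ring
  -- Cauchy–Schwarz for the bilinear form
  have hCS : ∀ u v : Fin n → ℝ,
      (u ⬝ᵥ (D *ᵥ v))^2 ≤ (u ⬝ᵥ (D *ᵥ u)) * (v ⬝ᵥ (D *ᵥ v)) := by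
    intro u v
    have hd : discrim (u ⬝ᵥ (D *ᵥ u)) (2*(u ⬝ᵥ (D *ᵥ v))) (v ⬝ᵥ (D *ᵥ v)) ≤ 0 := by
      apply discrim_le_zero
      intro t
      have h0 := hq0 (t • u + (1:ℝ) • v)
      rw [hexp u v t 1] at h0
      linarith [h0]
    rw [discrim] at hd
    linarith [hd]
  -- minimality
  have hmin' : ∀ y, h yhat ≤ h y := fun y => hmin (Set.mem_univ y)
  -- strong convexity of h at the minimizer
  have key : ∀ y, h yhat + c * quadE D (y - yhat) ≤ h y := by
    intro y
    set a : Fin n → ℝ := E (yhat - x) with ha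
    set b : Fin n → ℝ := E (y - x) with hb
    set qa : ℝ := a ⬝ᵥ (D *ᵥ a) with hqa
    set qb : ℝ := b ⬝ᵥ (D *ᵥ b) with hqb
    set Bab : ℝ := a ⬝ᵥ (D *ᵥ b) with hBab
    -- quadE D (y - yhat) in terms of a, b
    have hba : E (y - yhat) = (-1 : ℝ) • a + (1:ℝ) • b := by
      have h1 : y - yhat = (y - x) - (yhat - x) := by abel
      rw [h1, hE_sub, ha, hb]; funext i; simp; ring
    have hqd : quadE D (y - yhat) = qa - 2*Bab + qb := by
      rw [hquad, hba, hexp, hqa, hqb, hBab]; ring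
    set qd : ℝ := quadE D (y - yhat) with hqdd
    have hqd0 : 0 ≤ qd := by rw [hqdd, hquad]; exact hq0 _
    have hK0 : 0 ≤ h y - h yhat := by have := hmin' y; linarith
    -- per-t inequality
    have hstep : ∀ t : ℝ, 0 < t → t < 1 → (1-t) * (c * qd) ≤ h y - h yhat := by
      intro t ht0 ht1
      set z : EuclideanSpace ℝ (Fin n) := (1-t) • yhat + t • y with hz
      have hzx : z - x = (1-t) • (yhat - x) + t • (y - x) := by rw [hz]; module
      have hinner : (inner ℝ g (z - x) : ℝ)
          = (1-t) * (inner ℝ g (yhat - x) : ℝ) + t * (inner ℝ g (y - x) : ℝ) := by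
        rw [hzx, inner_add_right, real_inner_smul_right, real_inner_smul_right]
      have hqz : quadE D (z - x) = (1-t)^2 * qa + 2*(1-t)*t*Bab + t^2 * qb := by
        rw [hquad, hzx, hE_add, hE_smul, hE_smul, ← ha, ← hb, hexp, hqa, hqb, hBab]
      have hφ : φ z ≤ (1-t) * φ yhat + t * φ y :=
        hconv.2 (Set.mem_univ yhat) (Set.mem_univ y) (by linarith) (le_of_lt ht0) (by ring)
      have hzle : h yhat ≤ h z := hmin' z
      have hhz : h z = (1-t) * (inner ℝ g (yhat - x) : ℝ) + t * (inner ℝ g (y - x) : ℝ)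
          + c * ((1-t)^2 * qa + 2*(1-t)*t*Bab + t^2 * qb) + φ z - φ x := by
        rw [hval z, hinner, hqz]
      have hhyhat : h yhat = (inner ℝ g (yhat - x) : ℝ) + c * qa + φ yhat - φ x := by
        rw [hval yhat, hquad, ← ha, hqa]
      have hhy : h y = (inner ℝ g (y - x) : ℝ) + c * qb + φ y - φ x := by
        rw [hval y, hquad, ← hb, hqb]
      rw [hhz, hhyhat] at hzle
      have hchain : t * ((1-t) * (c * qd)) ≤ t * (h y - h yhat) := by
        rw [hhy, hhyhat, hqd]
        linarith [hzle, hφ]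
      exact le_of_mul_le_mul_left hchain ht0
    -- take t → 0
    have hMK : c * qd ≤ h y - h yhat := by
      by_contra hcon
      push_neg at hcon
      set M : ℝ := c * qd with hM
      set K : ℝ := h y - h yhat with hKd
      have hM0 : 0 < M := lt_of_le_of_lt hK0 hcon
      have ht0 : 0 < (M - K)/(2*M) := by
        apply div_pos (by linarith) (by linarith)
      have ht1 : (M - K)/(2*M) < 1 := by
        rw [div_lt_one (by linarith)]; linarith
      have := hstep _ ht0 ht1
      have hMne : M ≠ 0 := ne_of_gt hM0
      have hexpand : (1 - (M - K)/(2*M)) * M = (M + K)/2 := by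
        field_simp; ring
      linarith [hexpand, this]
    linarith [hMK]
  -- h x = 0
  have hx0 : h x = 0 := by
    have h1 : quadE D (x - x) = 0 := by
      rw [hquad]
      have h2 : E (x - x) = 0 := by funext i; simp [hE]
      rw [h2, mulVec_zero, dotProduct_zero]
    rw [hval x, h1]
    simp only [sub_self, inner_zero_right]
    ring
  have hHy : h yhat ≤ 0 := by have := hmin' x; linarith
  have h2τ : (0:ℝ) < 2 + τ := by linarith
  have hHt0 : h ytil ≤ 0 := by
    have h1 : (2/(2+τ)) * h yhat ≤ 0 :=
      mul_nonpos_of_nonneg_of_nonpos (by positivity) hHy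
    linarith
  -- -h yhat ≤ (1 + τ/2) * (-h ytil)
  have hHyHt : -h yhat ≤ (1 + τ/2) * (-h ytil) := by
    have h1 : h ytil * (2+τ) ≤ (2/(2+τ)) * h yhat * (2+τ) :=
      mul_le_mul_of_nonneg_right happrox (le_of_lt h2τ)
    have h2 : (2/(2+τ)) * h yhat * (2+τ) = 2 * h yhat := by field_simp
    linarith [h1, h2]
  -- the three quadratic quantities
  set a : Fin n → ℝ := E (yhat - x) with ha
  set d : Fin n → ℝ := E (ytil - yhat) with hd
  set A : ℝ := a ⬝ᵥ (D *ᵥ a) with hA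
  set Bq : ℝ := d ⬝ᵥ (D *ᵥ d) with hBq
  set Bad : ℝ := a ⬝ᵥ (D *ᵥ d) with hBad
  have hA0 : 0 ≤ A := hq0 a
  have hB0 : 0 ≤ Bq := hq0 d
  -- bound on A : c * A ≤ -h yhat
  have hcA : c * A ≤ -h yhat := by
    have hk := key x
    have h1 : quadE D (x - yhat) = A := by
      rw [hquad]
      have h2 : E (x - yhat) = (-1:ℝ) • a + (0:ℝ) • a := by
        rw [ha]
        have : x - yhat = -(yhat - x) := by abel
        rw [this]; funext i; simp [hE]
      rw [h2, hexp, hA]; ring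
    rw [h1] at hk
    linarith [hx0, hk]
  -- bound on Bq : c * Bq ≤ h ytil - h yhat
  have hcB : c * Bq ≤ h ytil - h yhat := by
    have hk := key ytil
    have h1 : quadE D (ytil - yhat) = Bq := by rw [hquad, ← hd]
    rw [h1] at hk; linarith
  -- translate to bounds involving -h ytil
  have hAbound : A ≤ 2*α * ((1 + τ/2) * (-h ytil)) := by
    have h1 : c * A ≤ (1 + τ/2) * (-h ytil) := le_trans hcA hHyHt
    rw [hcdef] at h1
    calc A = 2*α * (1/(2*α) * A) := by field_simp
    _ ≤ 2*α * ((1 + τ/2) * (-h ytil)) := by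
        apply mul_le_mul_of_nonneg_left h1 (le_of_lt hα2)
  have hBbound : Bq ≤ 2*α * ((τ/2) * (-h ytil)) := by
    have h1 : h ytil - h yhat ≤ (τ/2) * (-h ytil) := by linarith [hHyHt]
    have h2 : c * Bq ≤ (τ/2) * (-h ytil) := le_trans hcB h1
    rw [hcdef] at h2
    calc Bq = 2*α * (1/(2*α) * Bq) := by field_simp
    _ ≤ 2*α * ((τ/2) * (-h ytil)) := by
        apply mul_le_mul_of_nonneg_left h2 (le_of_lt hα2)
  -- C = A + 2 Bad + Bq
  have hCeq : quadE D (ytil - x) = A + 2*Bad + Bq := by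
    rw [hquad]
    have h1 : E (ytil - x) = (1:ℝ) • a + (1:ℝ) • d := by
      rw [ha, hd]
      funext i
      simp [hE]
    rw [h1, hexp, hA, hBq, hBad]; ring
  -- Cauchy–Schwarz: Bad ≤ √A √Bq
  have hBadCS : Bad ≤ Real.sqrt A * Real.sqrt Bq := by
    have h1 := hCS a d
    calc Bad ≤ |Bad| := le_abs_self _
    _ = Real.sqrt (Bad^2) := (Real.sqrt_sq_eq_abs _).symm
    _ ≤ Real.sqrt (A * Bq) := Real.sqrt_le_sqrt h1
    _ = Real.sqrt A * Real.sqrt Bq := Real.sqrt_mul hA0 _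
  -- sqrt bounds
  set k : ℝ := Real.sqrt (2*α) with hk
  set r1 : ℝ := Real.sqrt (1 + τ/2) with hr1
  set r2 : ℝ := Real.sqrt (τ/2) with hr2
  set s : ℝ := Real.sqrt (-h ytil) with hs
  have hk2 : k^2 = 2*α := Real.sq_sqrt (le_of_lt hα2)
  have hr12 : r1^2 = 1 + τ/2 := Real.sq_sqrt (by linarith)
  have hr22 : r2^2 = τ/2 := Real.sq_sqrt (by linarith)
  have hs2 : s^2 = -h ytil := Real.sq_sqrt (by linarith)
  have hk0 : 0 ≤ k := Real.sqrt_nonneg _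
  have hr10 : 0 ≤ r1 := Real.sqrt_nonneg _
  have hr20 : 0 ≤ r2 := Real.sqrt_nonneg _
  have hs0 : 0 ≤ s := Real.sqrt_nonneg _
  have hsA : Real.sqrt A ≤ k * r1 * s := by
    have h1 : A ≤ (k * r1 * s)^2 := by
      have : (k * r1 * s)^2 = k^2 * r1^2 * s^2 := by ring
      rw [this, hk2, hr12, hs2]; linarith [hAbound]
    calc Real.sqrt A ≤ Real.sqrt ((k * r1 * s)^2) := Real.sqrt_le_sqrt h1
    _ = k * r1 * s := Real.sqrt_sq (by positivity)
  have hsB : Real.sqrt Bq ≤ k * r2 * s := by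
    have h1 : Bq ≤ (k * r2 * s)^2 := by
      have : (k * r2 * s)^2 = k^2 * r2^2 * s^2 := by ring
      rw [this, hk2, hr22, hs2]; linarith [hBbound]
    calc Real.sqrt Bq ≤ Real.sqrt ((k * r2 * s)^2) := Real.sqrt_le_sqrt h1
    _ = k * r2 * s := Real.sqrt_sq (by positivity)
  -- bound on C
  have hCbound : quadE D (ytil - x) ≤ 2*α * (r1 + r2)^2 * (-h ytil) := by
    rw [hCeq]
    have hsq : 0 ≤ Real.sqrt A := Real.sqrt_nonneg _
    have hsq2 : 0 ≤ Real.sqrt Bq := Real.sqrt_nonneg _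
    have h1 : A + 2*Bad + Bq ≤ (Real.sqrt A + Real.sqrt Bq)^2 := by
      have h6 : (Real.sqrt A + Real.sqrt Bq)^2
          = A + 2*(Real.sqrt A * Real.sqrt Bq) + Bq := by
        rw [add_sq, Real.sq_sqrt hA0, Real.sq_sqrt hB0]; ring
      linarith [hBadCS, h6]
    have h4 : (Real.sqrt A + Real.sqrt Bq)^2 ≤ (k * r1 * s + k * r2 * s)^2 := by
      exact pow_le_pow_left₀ (by positivity) (by linarith [hsA, hsB]) 2
    have h5 : (k * r1 * s + k * r2 * s)^2 = k^2 * (r1 + r2)^2 * s^2 := by ring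
    rw [h5, hk2, hs2] at h4
    linarith
  -- norm vs dot product
  have hnorm : ‖ytil - x‖^2 = E (ytil - x) ⬝ᵥ E (ytil - x) := by
    rw [EuclideanSpace.norm_eq, Real.sq_sqrt (by positivity)]
    simp [dotProduct, hE, Real.norm_eq_abs, sq_abs, sq, Finset.mul_sum]
  have hnormC : ‖ytil - x‖^2 ≤ μ * quadE D (ytil - x) := by
    have h1 := hlow (E (ytil - x))
    rw [← hnorm] at h1
    have h2 : quadE D (ytil - x) = E (ytil - x) ⬝ᵥ (D *ᵥ E (ytil - x)) := hquad _
    rw [← h2] at h1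
    have h3 : (1/μ) * ‖ytil - x‖^2 ≤ quadE D (ytil - x) := h1
    calc ‖ytil - x‖^2 = μ * ((1/μ) * ‖ytil - x‖^2) := by field_simp
    _ ≤ μ * quadE D (ytil - x) := mul_le_mul_of_nonneg_left h3 (le_of_lt hμ)
  -- final assembly
  have hfinal : μ * quadE D (ytil - x) ≤ 2 * αmax * μ * (r1 + r2)^2 * (-h ytil) := by
    have h1 : μ * quadE D (ytil - x) ≤ μ * (2*α * (r1 + r2)^2 * (-h ytil)) :=
      mul_le_mul_of_nonneg_left hCbound (le_of_lt hμ)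
    have h2 : μ * (2*α * (r1 + r2)^2 * (-h ytil)) ≤ 2 * αmax * μ * (r1 + r2)^2 * (-h ytil) := by
      have hge : 0 ≤ (r1 + r2)^2 * (-h ytil) := by
        have : 0 ≤ -h ytil := by linarith
        positivity
      have h3 : 0 ≤ (2*(αmax - α)) * μ * ((r1 + r2)^2 * (-h ytil)) :=
        mul_nonneg (mul_nonneg (by linarith) hμ.le) hge
      linarith [h3]
    linarith
  linarith [hnormC, hfinal]
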